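/- Let m, k be integers with m ≥ 5 and 2 ≤ k ≤ ⌊(m-1)/2⌋, let S be a nonempty subset of {1,...,k}, and let f_{(m,k)} be the associated function on 𝔽_3^m. Then every nonzero codeword of the code C_{f_{(m,k)}} has Hamming weight at least Σ_{j=1}^{k} 2^j·C(m, j), and the codeword c_{1,0} (u = 1, v = 0) has Hamming weight exactly Σ_{j=1}^{k} 2^j·C(m, j); that is, the minimum distance of C_{f_{(m,k)}} equals Σ_{j=1}^{k} 2^j·C(m, j). -/

import Mathlib

open Finset

/-- The function `f_{(m,k)} : 𝔽_3^m → 𝔽_3` attached to a subset `S ⊆ {1,…,k}`: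
`-1` if `wt(x) ∈ S`, `1` if `wt(x) ∈ {1,…,k} \ S`, `0` otherwise. -/
def fmk {m : ℕ} (k : ℕ) (S : Finset ℕ) (x : Fin m → ZMod 3) : ZMod 3 :=
  if hammingNorm x ∈ S then -1
  else if hammingNorm x ∈ Finset.Icc 1 k then 1
  else 0

/-- The Hamming weight of the codeword `c_{u,v}` of the code `C_h`, i.e. the number
of `x ∈ 𝔽_3^m \ {0}` with `u·h(x) + v·x ≠ 0`. -/
def cwWeight {m : ℕ} (h : (Fin m → ZMod 3) → ZMod 3)
    (u : ZMod 3) (v : Fin m → ZMod 3) : ℕ :=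
  (Finset.univ.filter fun x : Fin m → ZMod 3 =>
    x ≠ 0 ∧ u * h x + ∑ j, v j * x j ≠ 0).card

lemma zmod3_ne_zero_iff' : ∀ a : ZMod 3, a ≠ 0 ↔ a ∈ ({1,2} : Finset (ZMod 3)) := by decide

lemma card_supp' {m : ℕ} (s : Finset (Fin m)) :
    (univ.filter fun x : Fin m → ZMod 3 =>
      (univ.filter fun i => x i ≠ 0) = s).card = 2 ^ s.card := by
  have h : (univ.filter fun x : Fin m → ZMod 3 =>
      (univ.filter fun i => x i ≠ 0) = s)
      = Fintype.piFinset (fun i => if i ∈ s then ({1,2} : Finset (ZMod 3)) else {0}) := by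
    ext x
    simp only [mem_filter, mem_univ, true_and, Fintype.mem_piFinset, Finset.ext_iff,
      mem_filter, mem_univ, true_and]
    refine forall_congr' fun i => ?_
    by_cases hi : i ∈ s
    · simpa [hi] using zmod3_ne_zero_iff' (x i)
    · simp only [hi, if_false, mem_singleton, iff_false_intro hi]
      tauto
  rw [h, Fintype.card_piFinset]
  have h2 : ∀ i : Fin m, (if i ∈ s then ({1,2} : Finset (ZMod 3)) else {0}).card
      = if i ∈ s then 2 else 1 := by
    intro i; split <;> decide
  rw [Finset.prod_congr rfl (fun i _ => h2 i), Finset.prod_ite_mem, univ_inter,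
    Finset.prod_const]

lemma card_wt_eq' {m : ℕ} (j : ℕ) :
    (univ.filter fun x : Fin m → ZMod 3 => hammingNorm x = j).card
      = 2 ^ j * m.choose j := by
  have key : (univ.filter fun x : Fin m → ZMod 3 => hammingNorm x = j).card
      = ∑ s ∈ powersetCard j (univ : Finset (Fin m)),
        ((univ.filter fun x : Fin m → ZMod 3 => hammingNorm x = j).filter
          (fun x => (univ.filter fun i => x i ≠ 0) = s)).card := by
    apply Finset.card_eq_sum_card_fiberwise
    intro x hx
    simp only [mem_coe, mem_filter, mem_univ, true_and] at hx
    rw [mem_coe, mem_powersetCard]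
    exact ⟨subset_univ _, hx⟩
  rw [key]
  have h2 : ∀ s ∈ powersetCard j (univ : Finset (Fin m)),
      ((univ.filter fun x : Fin m → ZMod 3 => hammingNorm x = j).filter
        (fun x => (univ.filter fun i => x i ≠ 0) = s)).card = 2 ^ j := by
    intro s hs
    rw [mem_powersetCard] at hs
    rw [Finset.filter_filter]
    have : (univ.filter fun x : Fin m → ZMod 3 =>
        hammingNorm x = j ∧ (univ.filter fun i => x i ≠ 0) = s)
        = univ.filter fun x : Fin m → ZMod 3 => (univ.filter fun i => x i ≠ 0) = s := by
      ext x
      simp only [mem_filter, mem_univ, true_and, and_iff_right_iff_imp]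
      intro h
      show (univ.filter fun i => x i ≠ 0).card = j
      rw [h, hs.2]
    rw [this, card_supp', hs.2]
  rw [Finset.sum_congr rfl h2, Finset.sum_const, card_powersetCard, card_univ,
    Fintype.card_fin, smul_eq_mul, mul_comm]

lemma card_wt_mem' {m k : ℕ} :
    (univ.filter fun x : Fin m → ZMod 3 => hammingNorm x ∈ Icc 1 k).card
      = ∑ j ∈ Icc 1 k, 2 ^ j * m.choose j := by
  have key : (univ.filter fun x : Fin m → ZMod 3 => hammingNorm x ∈ Icc 1 k).card
      = ∑ j ∈ Icc 1 k,
        ((univ.filter fun x : Fin m → ZMod 3 => hammingNorm x ∈ Icc 1 k).filter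
          (fun x => hammingNorm x = j)).card := by
    apply Finset.card_eq_sum_card_fiberwise
    intro x hx
    simpa using hx
  rw [key]
  refine Finset.sum_congr rfl fun j hj => ?_
  rw [Finset.filter_filter]
  rw [show (univ.filter fun x : Fin m → ZMod 3 =>
      hammingNorm x ∈ Icc 1 k ∧ hammingNorm x = j)
      = univ.filter fun x : Fin m → ZMod 3 => hammingNorm x = j from by
    ext x; simp only [mem_filter, mem_univ, true_and, and_iff_right_iff_imp]
    intro h; rw [h]; exact hj]
  exact card_wt_eq' j

lemma fiber_card' {m : ℕ} (hm : 1 ≤ m) (v : Fin m → ZMod 3) (hv : v ≠ 0) (c : ZMod 3) :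
    (univ.filter fun x : Fin m → ZMod 3 => ∑ j, v j * x j = c).card = 3 ^ (m - 1) := by
  obtain ⟨i, hi⟩ : ∃ i, v i ≠ 0 := by
    by_contra h; push_neg at h; exact hv (funext h)
  set d : Fin m → ZMod 3 := Pi.single i (v i)⁻¹ with hd
  have hLd : ∑ j, v j * d j = 1 := by
    rw [Finset.sum_eq_single i]
    · simp [hd, Pi.single_eq_same]
      exact mul_inv_cancel₀ hi
    · intro b _ hb; simp [hd, Pi.single_eq_of_ne hb]
    · simp
  have hfib : ∀ c' : ZMod 3,
      (univ.filter fun x : Fin m → ZMod 3 => ∑ j, v j * x j = c').card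
      = (univ.filter fun x : Fin m → ZMod 3 => ∑ j, v j * x j = 0).card := by
    intro c'
    apply Finset.card_nbij' (fun x => x - c' • d) (fun x => x + c' • d)
    · intro x hx
      simp only [mem_coe, mem_filter, mem_univ, true_and] at hx ⊢
      have : ∑ j, v j * (x - c' • d) j = (∑ j, v j * x j) - c' * ∑ j, v j * d j := by
        rw [Finset.mul_sum, ← Finset.sum_sub_distrib]
        refine Finset.sum_congr rfl fun j _ => ?_
        simp [Pi.sub_apply, Pi.smul_apply, smul_eq_mul]; ring
      rw [this, hx, hLd, mul_one, sub_self]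
    · intro x hx
      simp only [mem_coe, mem_filter, mem_univ, true_and] at hx ⊢
      have : ∑ j, v j * (x + c' • d) j = (∑ j, v j * x j) + c' * ∑ j, v j * d j := by
        rw [Finset.mul_sum, ← Finset.sum_add_distrib]
        refine Finset.sum_congr rfl fun j _ => ?_
        simp [Pi.add_apply, Pi.smul_apply, smul_eq_mul]; ring
      rw [this, hx, hLd, mul_one, zero_add]
    · intro x _; simp
    · intro x _; simp
  have hpart : ∑ c' : ZMod 3,
      (univ.filter fun x : Fin m → ZMod 3 => ∑ j, v j * x j = c').card = (3:ℕ) ^ m := by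
    have h := Finset.card_eq_sum_card_fiberwise
      (f := fun x : Fin m → ZMod 3 => ∑ j, v j * x j) (s := univ) (t := univ)
      (fun x _ => mem_univ _)
    rw [card_univ] at h
    rw [← h, Fintype.card_fun, ZMod.card, Fintype.card_fin]
  rw [Finset.sum_congr rfl (fun c' _ => hfib c'), Finset.sum_const, card_univ,
    ZMod.card, smul_eq_mul] at hpart
  have hm3 : (3:ℕ) ^ m = 3 * 3 ^ (m - 1) := by
    cases m with
    | zero => omega
    | succ n => rw [Nat.succ_sub_one, pow_succ]; ring
  rw [hfib c]
  exact Nat.eq_of_mul_eq_mul_left (by norm_num) (hpart.trans hm3)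

lemma W_le' {m k : ℕ} (hkm : 2 * k + 1 ≤ m) :
    3 * ∑ j ∈ Icc 1 k, 2 ^ j * m.choose j ≤ 3 ^ m := by
  have h3m : (3:ℕ) ^ m = ∑ j ∈ range (m+1), 2 ^ j * m.choose j := by
    have := add_pow (2:ℕ) 1 m
    norm_num at this
    rw [show (3:ℕ) = 2 + 1 by norm_num, this]
  have hre : ∑ j ∈ Icc (m-k) (m-1), 2 ^ j * m.choose j
      = ∑ j ∈ Icc 1 k, 2 ^ (m-j) * m.choose j := by
    refine Finset.sum_bij' (fun j _ => m - j) (fun j _ => m - j) ?_ ?_ ?_ ?_ ?_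
    · intro a ha; rw [mem_Icc] at ha; rw [mem_Icc]; omega
    · intro a ha; rw [mem_Icc] at ha; rw [mem_Icc]; omega
    · intro a ha; rw [mem_Icc] at ha; omega
    · intro a ha; rw [mem_Icc] at ha; omega
    · intro a ha
      rw [mem_Icc] at ha
      rw [show m - (m - a) = a by omega, Nat.choose_symm (by omega : a ≤ m)]
  have hterm : ∀ j ∈ Icc 1 k, 2 * (2 ^ j * m.choose j) ≤ 2 ^ (m-j) * m.choose j := by
    intro j hj
    rw [mem_Icc] at hj
    have : (2:ℕ) * 2 ^ j ≤ 2 ^ (m-j) := by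
      rw [← pow_succ']
      exact Nat.pow_le_pow_right (by norm_num) (by omega)
    calc 2 * (2 ^ j * m.choose j) = (2 * 2 ^ j) * m.choose j := by ring
    _ ≤ 2 ^ (m-j) * m.choose j := Nat.mul_le_mul_right _ this
  have hdisj : Disjoint (Icc 1 k) (Icc (m-k) (m-1)) := by
    rw [Finset.disjoint_left]
    intro a ha hb
    rw [mem_Icc] at ha hb
    omega
  have hsub : Icc 1 k ∪ Icc (m-k) (m-1) ⊆ range (m+1) := by
    intro a ha
    rw [mem_union, mem_Icc, mem_Icc] at ha
    rw [mem_range]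
    omega
  calc 3 * ∑ j ∈ Icc 1 k, 2 ^ j * m.choose j
      = (∑ j ∈ Icc 1 k, 2 ^ j * m.choose j)
        + ∑ j ∈ Icc 1 k, 2 * (2 ^ j * m.choose j) := by
        rw [← Finset.mul_sum]; ring
    _ ≤ (∑ j ∈ Icc 1 k, 2 ^ j * m.choose j)
        + ∑ j ∈ Icc 1 k, 2 ^ (m-j) * m.choose j :=
        Nat.add_le_add_left (Finset.sum_le_sum hterm) _
    _ = (∑ j ∈ Icc 1 k, 2 ^ j * m.choose j)
        + ∑ j ∈ Icc (m-k) (m-1), 2 ^ j * m.choose j := by rw [hre]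
    _ = ∑ j ∈ Icc 1 k ∪ Icc (m-k) (m-1), 2 ^ j * m.choose j :=
        (Finset.sum_union hdisj).symm
    _ ≤ ∑ j ∈ range (m+1), 2 ^ j * m.choose j := Finset.sum_le_sum_of_subset hsub
    _ = 3 ^ m := h3m.symm

lemma arith_key' : ∀ W T Z M : ℕ, Z ≤ W + T → 3 * W ≤ M → M = 3 * T → W ≤ M - Z := by
  intro W T Z M h1 h2 h3; omega

lemma fmk_ne_zero_iff' {m k : ℕ} {S : Finset ℕ} (hSsub : S ⊆ Finset.Icc 1 k)
    (x : Fin m → ZMod 3) :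
    fmk k S x ≠ 0 ↔ hammingNorm x ∈ Finset.Icc 1 k := by
  unfold fmk
  by_cases h1 : hammingNorm x ∈ S
  · rw [if_pos h1]
    constructor
    · intro _; exact hSsub h1
    · intro _; decide
  · rw [if_neg h1]
    by_cases h2 : hammingNorm x ∈ Finset.Icc 1 k
    · rw [if_pos h2]
      constructor
      · intro _; exact h2
      · intro _; decide
    · rw [if_neg h2]
      simp [h2]

lemma fmk_eq_zero' {m k : ℕ} {S : Finset ℕ} (hSsub : S ⊆ Finset.Icc 1 k)
    {x : Fin m → ZMod 3} (h : hammingNorm x ∉ Finset.Icc 1 k) : fmk k S x = 0 := by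
  unfold fmk
  rw [if_neg (fun hx => h (hSsub hx)), if_neg h]

lemma wt_mem_ne_zero' {m k : ℕ} {x : Fin m → ZMod 3}
    (h : hammingNorm x ∈ Finset.Icc 1 k) : x ≠ 0 := by
  intro h0
  rw [h0, hammingNorm_zero, mem_Icc] at h
  omega

/-- For `m ≥ 5`, `2 ≤ k ≤ ⌊(m-1)/2⌋` and `∅ ≠ S ⊆ {1,…,k}`, every
nonzero codeword of `C_{f_{(m,k)}}` has Hamming weight at least `Σ_{j=1}^{k} 2^j·C(m,j)`,
and the codeword `c_{1,0}` has Hamming weight exactly `Σ_{j=1}^{k} 2^j·C(m,j)`: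
the minimum distance of `C_{f_{(m,k)}}` is `Σ_{j=1}^{k} 2^j·C(m,j)`. -/
theorem stmt_10 (m k : ℕ) (hm : 5 ≤ m) (hk2 : 2 ≤ k) (hk : k ≤ (m - 1) / 2)
    (S : Finset ℕ) (hS : S.Nonempty) (hSsub : S ⊆ Finset.Icc 1 k) :
    (∀ (u : ZMod 3) (v : Fin m → ZMod 3),
      (∃ x : Fin m → ZMod 3, x ≠ 0 ∧ u * fmk k S x + ∑ j, v j * x j ≠ 0) →
      ∑ j ∈ Finset.Icc 1 k, 2 ^ j * m.choose j ≤ cwWeight (fmk k S) u v)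
    ∧ cwWeight (fmk (m := m) k S) 1 0 = ∑ j ∈ Finset.Icc 1 k, 2 ^ j * m.choose j := by
  have hkm : 2 * k + 1 ≤ m := by omega
  have hW3 : 3 * ∑ j ∈ Icc 1 k, 2 ^ j * m.choose j ≤ 3 ^ m := W_le' hkm
  have hm3 : (3:ℕ) ^ m = 3 * 3 ^ (m - 1) := by
    cases m with
    | zero => omega
    | succ n => rw [Nat.succ_sub_one, pow_succ]; ring
  have hcardu : (univ : Finset (Fin m → ZMod 3)).card = 3 ^ m := by
    rw [card_univ, Fintype.card_fun, ZMod.card, Fintype.card_fin]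
  -- The weight of c_{u,0} for u ≠ 0 equals W
  have hweq : ∀ u : ZMod 3, u ≠ 0 → cwWeight (fmk (m := m) k S) u 0
      = ∑ j ∈ Icc 1 k, 2 ^ j * m.choose j := by
    intro u hu
    unfold cwWeight
    rw [show (univ.filter fun x : Fin m → ZMod 3 =>
        x ≠ 0 ∧ u * fmk k S x + ∑ j, (0 : Fin m → ZMod 3) j * x j ≠ 0)
        = univ.filter fun x : Fin m → ZMod 3 => hammingNorm x ∈ Icc 1 k from by
      ext x
      simp only [mem_filter, mem_univ, true_and, Pi.zero_apply, zero_mul,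
        Finset.sum_const_zero, add_zero]
      constructor
      · rintro ⟨-, hx2⟩
        have : fmk k S x ≠ 0 := fun h => hx2 (by rw [h, mul_zero])
        exact (fmk_ne_zero_iff' hSsub x).mp this
      · intro hx
        refine ⟨wt_mem_ne_zero' hx, ?_⟩
        exact mul_ne_zero hu ((fmk_ne_zero_iff' hSsub x).mpr hx)]
    exact card_wt_mem'
  constructor
  · rintro u v ⟨x0, hx00, hc0⟩
    by_cases hu : u = 0
    · -- u = 0, so v ≠ 0
      subst hu
      have hv : v ≠ 0 := by
        intro h; subst h
        simp at hc0
      unfold cwWeight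
      rw [show (univ.filter fun x : Fin m → ZMod 3 =>
          x ≠ 0 ∧ (0:ZMod 3) * fmk k S x + ∑ j, v j * x j ≠ 0)
          = univ.filter fun x : Fin m → ZMod 3 => ¬ (∑ j, v j * x j = 0) from by
        ext x
        simp only [mem_filter, mem_univ, true_and, zero_mul, zero_add]
        constructor
        · rintro ⟨-, h⟩; exact h
        · intro h
          refine ⟨?_, h⟩
          intro h0; subst h0
          exact h (by simp)]
      rw [Finset.filter_not, Finset.card_sdiff_of_subset (Finset.filter_subset _ _), hcardu,
        fiber_card' (by omega) v hv 0]
      omega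
    · by_cases hv : v = 0
      · subst hv
        exact le_of_eq (hweq u hu).symm
      · -- u ≠ 0, v ≠ 0
        unfold cwWeight
        rw [show (univ.filter fun x : Fin m → ZMod 3 =>
            x ≠ 0 ∧ u * fmk k S x + ∑ j, v j * x j ≠ 0)
            = univ.filter fun x : Fin m → ZMod 3 =>
              ¬ (u * fmk k S x + ∑ j, v j * x j = 0) from by
          ext x
          simp only [mem_filter, mem_univ, true_and]
          constructor
          · rintro ⟨-, h⟩; exact h
          · intro h
            refine ⟨?_, h⟩
            intro h0; subst h0
            apply h
            have h1 : fmk (m := m) k S 0 = 0 :=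
              fmk_eq_zero' hSsub (by rw [hammingNorm_zero]; simp)
            rw [h1, mul_zero]
            simp]
        rw [Finset.filter_not, Finset.card_sdiff_of_subset (Finset.filter_subset _ _), hcardu]
        have hZ : ((univ : Finset (Fin m → ZMod 3)).filter
            (fun x => u * fmk k S x + ∑ j, v j * x j = 0)).card
            ≤ (∑ j ∈ Icc 1 k, 2 ^ j * m.choose j) + 3 ^ (m-1) := by
          have hsub : ((univ : Finset (Fin m → ZMod 3)).filter
              (fun x => u * fmk k S x + ∑ j, v j * x j = 0))
              ⊆ (univ.filter fun x : Fin m → ZMod 3 => hammingNorm x ∈ Icc 1 k)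
                ∪ (univ.filter fun x : Fin m → ZMod 3 => ∑ j, v j * x j = 0) := by
            intro x hx
            simp only [mem_filter, mem_univ, true_and, mem_union] at hx ⊢
            by_cases hA : hammingNorm x ∈ Icc 1 k
            · exact Or.inl hA
            · refine Or.inr ?_
              have h0 : fmk k S x = 0 := fmk_eq_zero' hSsub hA
              rw [h0, mul_zero, zero_add] at hx
              exact hx
          calc ((univ : Finset (Fin m → ZMod 3)).filter
              (fun x => u * fmk k S x + ∑ j, v j * x j = 0)).card
              ≤ ((univ.filter fun x : Fin m → ZMod 3 => hammingNorm x ∈ Icc 1 k)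
                ∪ (univ.filter fun x : Fin m → ZMod 3 => ∑ j, v j * x j = 0)).card :=
                Finset.card_le_card hsub
            _ ≤ (univ.filter fun x : Fin m → ZMod 3 => hammingNorm x ∈ Icc 1 k).card
                + (univ.filter fun x : Fin m → ZMod 3 => ∑ j, v j * x j = 0).card :=
                Finset.card_union_le _ _
            _ = (∑ j ∈ Icc 1 k, 2 ^ j * m.choose j) + 3 ^ (m-1) := by
                rw [card_wt_mem', fiber_card' (by omega) v hv 0]
        exact arith_key' _ _ _ _ hZ hW3 hm3
  · exact hweq 1 (by decide)
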